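/- arXiv:1112.0331 — 3 statements merged into one kernel-verified Lean document; each statement's English description precedes it below -/
import Mathlib

section
/- For the unit disc D in ℂ and A = (-1,1) ⊂ D, the relative extremal function of A with respect to D satisfies h_{A,D}(ζ) = (2/π)|Arg((1+ζ)/(1-ζ))| for all ζ ∈ D. -/
open Set Filter Topology

noncomputable section

/-- Plurisubharmonicity on a set, via upper semicontinuity together with the
sub-mean-value property along complex lines, expressed through majorization by
real parts of holomorphic polynomials (harmonic majorants) on circles. -/
def PlurisubharmonicOn {E : Type*} [NormedAddCommGroup E] [NormedSpace ℂ E]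
    (u : E → EReal) (s : Set E) : Prop :=
  UpperSemicontinuousOn u s ∧
  ∀ (a v : E) (r : ℝ), 0 < r →
    (∀ t : ℂ, ‖t‖ ≤ r → a + t • v ∈ s) →
    ∀ p : Polynomial ℂ,
      (∀ t : ℂ, ‖t‖ = r → u (a + t • v) ≤ (((p.eval t).re : ℝ) : EReal)) →
      u a ≤ (((p.eval 0).re : ℝ) : EReal)

/-- A set is pluripolar if it is contained in the `-∞` locus of a global
plurisubharmonic function which is not identically `-∞`. -/
def Pluripolar {E : Type*} [NormedAddCommGroup E] [NormedSpace ℂ E] (M : Set E) : Prop :=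
  ∃ u : E → EReal, PlurisubharmonicOn u Set.univ ∧ (∃ z, u z ≠ ⊥) ∧ M ⊆ {z | u z = ⊥}

/-- The relative extremal function `h_{A,D}`:
`h_{A,D}(z) = sup {u(z) : u ∈ PSH(D), u ≤ 1 on D, u ≤ 0 on A}`. -/
def relExtremal {E : Type*} [NormedAddCommGroup E] [NormedSpace ℂ E]
    (A D : Set E) (z : E) : ℝ :=
  sSup ((fun u : E → ℝ => u z) ''
    {u | PlurisubharmonicOn (fun w => ((u w : ℝ) : EReal)) D ∧
      (∀ w ∈ D, u w ≤ 1) ∧ ∀ w ∈ A, u w ≤ 0})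

/-- The upper semicontinuous regularization `h*_{A,D}` of the relative extremal
function. -/
def uscRelExtremal {E : Type*} [NormedAddCommGroup E] [NormedSpace ℂ E]
    (A D : Set E) (z : E) : ℝ :=
  Filter.limsup (relExtremal A D) (nhds z)

/-- A set `A` is locally pluriregular if it is nonempty and `h*_{A∩U,U}(a) = 0`
for every `a ∈ A` and every open neighborhood `U` of `a`. -/
def LocallyPluriregular {E : Type*} [NormedAddCommGroup E] [NormedSpace ℂ E]
    (A : Set E) : Prop :=
  A.Nonempty ∧ ∀ a ∈ A, ∀ U : Set E, IsOpen U → a ∈ U → uscRelExtremal (A ∩ U) U a = 0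

section Aux
open Polynomial Metric Complex

/-- Fejér-type kernel polynomial. -/
def kerPoly (N : ℕ) (c : ℂ) : Polynomial ℂ :=
  ∑ j ∈ Finset.range (2*N+1),
    Polynomial.C ((Nat.choose (2*N) j : ℂ)) * (Polynomial.C c * Polynomial.X) ^ (Nat.dist j N)

lemma kerPoly_eval (N : ℕ) (c t : ℂ) :
    (kerPoly N c).eval t
      = ∑ j ∈ Finset.range (2*N+1), (Nat.choose (2*N) j : ℂ) * (c*t) ^ (Nat.dist j N) := by
  simp [kerPoly, Polynomial.eval_finset_sum]

lemma kerPoly_eval_zero (N : ℕ) (c : ℂ) :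
    (kerPoly N c).eval 0 = (Nat.choose (2*N) N : ℂ) := by
  rw [kerPoly_eval]
  rw [Finset.sum_eq_single N]
  · simp [Nat.dist_self]
  · intro j hj hne
    have : Nat.dist j N ≠ 0 := fun h => hne (Nat.eq_of_dist_eq_zero h)
    simp [zero_pow this]
  · intro h
    exact absurd (Finset.mem_range.2 (by omega)) h

lemma kerPoly_re_eq {N : ℕ} {w : ℂ} (hw : w * (starRingEnd ℂ) w = 1) :
    (∑ j ∈ Finset.range (2*N+1), (Nat.choose (2*N) j : ℂ) * w ^ (Nat.dist j N)).re
      = (Complex.normSq (1+w))^N := by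
  have hterm : ∀ j, (w ^ j * ((starRingEnd ℂ) w) ^ N).re = (w ^ (Nat.dist j N)).re := by
    intro j
    rcases le_or_gt N j with h | h
    · have hd : Nat.dist j N = j - N := by simp [Nat.dist]; omega
      have e1 : w ^ j = w ^ (j - N) * w ^ N := by rw [← pow_add]; congr 1; omega
      have : w ^ j * ((starRingEnd ℂ) w) ^ N = w ^ (j - N) * (w * (starRingEnd ℂ) w) ^ N := by
        rw [e1, mul_pow]; ring
      rw [this, hw, one_pow, mul_one, hd]
    · have hd : Nat.dist j N = N - j := by simp [Nat.dist]; omega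
      have e1 : ((starRingEnd ℂ) w) ^ N = ((starRingEnd ℂ) w) ^ (N - j) * ((starRingEnd ℂ) w) ^ j := by
        rw [← pow_add]; congr 1; omega
      have : w ^ j * ((starRingEnd ℂ) w) ^ N
          = ((starRingEnd ℂ) w) ^ (N - j) * (w * (starRingEnd ℂ) w) ^ j := by
        rw [e1, mul_pow]; ring
      rw [this, hw, one_pow, mul_one, hd, ← map_pow]
      exact Complex.conj_re _
  have key : ∑ j ∈ Finset.range (2*N+1), (Nat.choose (2*N) j : ℂ) * (w ^ j * ((starRingEnd ℂ) w) ^ N)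
      = ((Complex.normSq (1+w) : ℝ) : ℂ) ^ N := by
    have h1 : (w + 1)^(2*N) = ∑ j ∈ Finset.range (2*N+1), w ^ j * (1:ℂ) ^ (2*N - j) * (Nat.choose (2*N) j : ℂ) :=
      add_pow w 1 (2*N)
    have h1' : ∑ j ∈ Finset.range (2*N+1), (Nat.choose (2*N) j : ℂ) * (w ^ j * ((starRingEnd ℂ) w) ^ N)
        = (w + 1)^(2*N) * ((starRingEnd ℂ) w) ^ N := by
      rw [h1, Finset.sum_mul]
      apply Finset.sum_congr rfl
      intro j hj
      ring
    rw [h1']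
    have h2 : (w + 1)^(2*N) * ((starRingEnd ℂ) w) ^ N = ((w + 1)^2 * (starRingEnd ℂ) w) ^ N := by
      rw [mul_pow, ← pow_mul]
    rw [h2]
    congr 1
    have e : (w+1)^2 * (starRingEnd ℂ) w = (w+1) * ((starRingEnd ℂ) w + w * (starRingEnd ℂ) w) := by ring
    rw [e, hw]
    have e2 : (starRingEnd ℂ) w + 1 = (starRingEnd ℂ) (w + 1) := by simp [map_add]
    rw [e2, Complex.mul_conj]
    rw [add_comm 1 w]
  have hre := congrArg Complex.re key
  rw [Complex.re_sum] at hre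
  rw [← Complex.ofReal_pow, Complex.ofReal_re] at hre
  rw [Complex.re_sum, ← hre]
  apply Finset.sum_congr rfl
  intro j hj
  have m1 : ((Nat.choose (2*N) j : ℂ) * w ^ (Nat.dist j N)).re
      = (Nat.choose (2*N) j : ℝ) * (w ^ (Nat.dist j N)).re := by
    simp [Complex.mul_re]
  have m2 : ((Nat.choose (2*N) j : ℂ) * (w ^ j * ((starRingEnd ℂ) w) ^ N)).re
      = (Nat.choose (2*N) j : ℝ) * (w ^ j * ((starRingEnd ℂ) w) ^ N).re := by
    simp [Complex.mul_re]
  rw [m1, m2, hterm j]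

lemma exists_good_N {x : ℝ} (h0 : 0 ≤ x) (h1 : x < 1) :
    ∃ N : ℕ, 1 ≤ N ∧ (2*N+1 : ℝ) * x^N < 1 := by
  have hx : ‖x‖ < 1 := by rwa [Real.norm_eq_abs, _root_.abs_of_nonneg h0]
  have hs : Summable (fun n : ℕ => ‖(n:ℝ)^1 * x^n‖) :=
    summable_norm_pow_mul_geometric_of_norm_lt_one 1 hx
  have t1 : Tendsto (fun n : ℕ => (n:ℝ) * x^n) atTop (nhds 0) := by
    have := (hs.of_norm).tendsto_atTop_zero
    simpa using this
  have t2 : Tendsto (fun n : ℕ => x^n) atTop (nhds 0) :=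
    tendsto_pow_atTop_nhds_zero_of_lt_one h0 h1
  have t3 : Tendsto (fun n : ℕ => (2*n+1 : ℝ) * x^n) atTop (nhds 0) := by
    have h := (t1.const_mul 2).add t2
    have h2 := h.congr (fun n => by ring :
      ∀ n : ℕ, 2*((n:ℝ) * x^n) + x^n = (2*n+1 : ℝ) * x^n)
    simpa using h2
  have := (t3.eventually (eventually_lt_nhds (by norm_num : (0:ℝ) < 1))).and
    (eventually_ge_atTop 1)
  obtain ⟨N, hN, hN1⟩ := this.exists
  exact ⟨N, hN1, hN⟩

lemma usc_nhds {s : Set ℂ} (hs : IsOpen s) {u : ℂ → ℝ} (husc : UpperSemicontinuousOn u s)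
    {x : ℂ} (hx : x ∈ s) {y : ℝ} (hy : u x < y) : ∀ᶠ z in nhds x, u z < y := by
  have h := husc x hx y hy
  rwa [nhdsWithin_eq_nhds.2 (hs.mem_nhds hx)] at h

lemma eq_sup_on_circle {s : Set ℂ} (hs : IsOpen s) {u : ℂ → ℝ}
    (husc : UpperSemicontinuousOn u s)
    (hsub : ∀ a r, 0 < r → Metric.closedBall a r ⊆ s →
      ∀ p : Polynomial ℂ, (∀ t : ℂ, ‖t‖ = r → u (a + t) ≤ (p.eval t).re) →
        u a ≤ (p.eval 0).re)
    {M : ℝ} (hM : ∀ z ∈ s, u z ≤ M)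
    {a : ℂ} (haM : u a = M) {ρ : ℝ} (hρ : 0 < ρ)
    (hball : Metric.closedBall a ρ ⊆ s) :
    ∀ t : ℂ, ‖t‖ = ρ → u (a + t) = M := by
  by_contra hcon
  push_neg at hcon
  obtain ⟨t0, ht0, hne⟩ := hcon
  have hsub0 : ∀ t : ℂ, ‖t‖ ≤ ρ → a + t ∈ s := by
    intro t ht
    exact hball (by simp [Metric.mem_closedBall, Complex.dist_eq, ht])
  have hmem0 : a + t0 ∈ s := hsub0 t0 ht0.le
  have hlt : u (a + t0) < M := lt_of_le_of_ne (hM _ hmem0) hne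
  set δ := (M - u (a + t0))/2 with hδdef
  have hδ : 0 < δ := by rw [hδdef]; linarith
  have husc0 : ∀ᶠ z in nhds (a + t0), u z < M - δ :=
    usc_nhds hs husc hmem0 (by rw [hδdef]; linarith)
  obtain ⟨η0, hη0, hη⟩ := Metric.eventually_nhds_iff.1 husc0
  set η := min η0 (2*ρ) with hηdef
  have hηpos : 0 < η := lt_min hη0 (by linarith)
  have hη2ρ : η ≤ 2*ρ := min_le_right _ _
  set x := (4 - η^2/ρ^2)/4 with hxdef
  have hρ2 : (0:ℝ) < ρ^2 := by positivity
  have hx0 : 0 ≤ x := by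
    rw [hxdef]
    have h1 : η^2 ≤ 4*ρ^2 := by nlinarith
    have : η^2/ρ^2 ≤ 4 := by rw [div_le_iff₀ hρ2]; linarith
    linarith
  have hx1 : x < 1 := by
    rw [hxdef]
    have : 0 < η^2/ρ^2 := by positivity
    linarith
  obtain ⟨N, hN1, hNx⟩ := exists_good_N hx0 hx1
  set c0 := ((Nat.choose (2*N) N : ℝ))/4^N with hc0def
  have h4N : (0:ℝ) < 4^N := by positivity
  have hchoose : (4:ℝ)^N ≤ (2*N+1) * (Nat.choose (2*N) N : ℝ) := by
    have hnat : 4^N ≤ (2*N+1) * Nat.choose (2*N) N := by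
      have hsum : ∑ j ∈ Finset.range (2*N+1), Nat.choose (2*N) j = 2^(2*N) :=
        Nat.sum_range_choose (2*N)
      have hle : ∑ j ∈ Finset.range (2*N+1), Nat.choose (2*N) j
          ≤ (2*N+1) * Nat.choose (2*N) N := by
        calc ∑ j ∈ Finset.range (2*N+1), Nat.choose (2*N) j
            ≤ ∑ _j ∈ Finset.range (2*N+1), Nat.choose (2*N) N := by
              apply Finset.sum_le_sum
              intro j _
              simpa using Nat.choose_le_middle j (2*N)
          _ = (2*N+1) * Nat.choose (2*N) N := by
              simp [Finset.sum_const, Finset.card_range, mul_comm]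
      calc 4^N = 2^(2*N) := by rw [pow_mul]; norm_num
        _ ≤ _ := hsum ▸ hle
    calc (4:ℝ)^N = ((4^N : ℕ) : ℝ) := by push_cast; ring
      _ ≤ (((2*N+1) * Nat.choose (2*N) N : ℕ) : ℝ) := by exact_mod_cast hnat
      _ = (2*N+1) * (Nat.choose (2*N) N : ℝ) := by push_cast; ring
  have hc0 : x^N < c0 := by
    have h2N1 : (0:ℝ) < 2*N+1 := by positivity
    have hc0ge : 1 ≤ (2*N+1) * c0 := by
      rw [hc0def, ← mul_div_assoc, le_div_iff₀ h4N, one_mul]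
      exact hchoose
    nlinarith [hNx, hc0ge, h2N1]
  -- the kernel polynomial
  set w0 : ℂ := (starRingEnd ℂ) t0 / ((ρ:ℂ))^2 with hw0def
  have hρC : ((ρ:ℂ))^2 ≠ 0 := by
    have : (ρ:ℂ) ≠ 0 := by exact_mod_cast hρ.ne'
    exact pow_ne_zero 2 this
  have ht0n : Complex.normSq t0 = ρ^2 := by
    rw [Complex.normSq_eq_norm_sq, ht0]
  -- facts on the circle
  have hcirc : ∀ t : ℂ, ‖t‖ = ρ →
      ((kerPoly N w0).eval t).re = (Complex.normSq (t + t0) / ρ^2)^N := by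
    intro t ht
    set w := w0 * t with hwdef
    have hwconj : w * (starRingEnd ℂ) w = 1 := by
      rw [Complex.mul_conj]
      have : Complex.normSq w = 1 := by
        rw [hwdef, map_mul, hw0def, map_div₀, Complex.normSq_conj, ht0n]
        have : Complex.normSq (((ρ:ℂ))^2) = ρ^2 * ρ^2 := by
          rw [show ((ρ:ℂ))^2 = ((ρ^2 : ℝ) : ℂ) by push_cast; ring, Complex.normSq_ofReal]
        rw [this, Complex.normSq_eq_norm_sq t, ht]
        field_simp
      rw [this]; norm_num
    have heval : ((kerPoly N w0).eval t).re = (Complex.normSq (1+w))^N := by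
      rw [kerPoly_eval]
      have : ∀ j ∈ Finset.range (2*N+1),
          (Nat.choose (2*N) j : ℂ) * (w0*t) ^ (Nat.dist j N)
            = (Nat.choose (2*N) j : ℂ) * w ^ (Nat.dist j N) := by
        intro j _; rw [hwdef]
      rw [Finset.sum_congr rfl this]
      exact kerPoly_re_eq hwconj
    rw [heval]
    congr 2
    -- normSq (1 + w) = normSq (t + t0) / ρ^2
    have h1w : 1 + w = ((starRingEnd ℂ) t0 * (t0 + t)) / ((ρ:ℂ))^2 := by
      rw [hwdef, hw0def]
      have ht0c : t0 * (starRingEnd ℂ) t0 = ((ρ:ℂ))^2 := by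
        rw [Complex.mul_conj, ht0n]; push_cast; ring
      rw [eq_div_iff hρC, add_mul, one_mul, div_mul_eq_mul_div, div_mul_eq_mul_div,
        mul_div_assoc, div_self hρC, mul_one, mul_add]
      rw [mul_comm ((starRingEnd ℂ) t0) t0, ht0c, mul_comm ((starRingEnd ℂ) t0) t]
    rw [h1w, map_div₀, map_mul, Complex.normSq_conj, ht0n]
    have : Complex.normSq (((ρ:ℂ))^2) = ρ^2 * ρ^2 := by
      rw [show ((ρ:ℂ))^2 = ((ρ^2 : ℝ) : ℂ) by push_cast; ring, Complex.normSq_ofReal]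
    rw [this]
    rw [add_comm t0 t]
    field_simp
  have hpara : ∀ t : ℂ, ‖t‖ = ρ →
      Complex.normSq (t + t0) = 4*ρ^2 - Complex.normSq (t - t0) := by
    intro t ht
    have h1 := Complex.normSq_add t t0
    have h2 := Complex.normSq_sub t t0
    have ht' : Complex.normSq t = ρ^2 := by rw [Complex.normSq_eq_norm_sq, ht]
    rw [h1, h2, ht', ht0n]; ring
  -- comparison polynomial
  set cA : ℝ := M + δ*x^N with hcAdef
  set cB : ℝ := δ/4^N with hcBdef
  set P := Polynomial.C ((cA:ℂ)) - Polynomial.C ((cB:ℂ)) * kerPoly N w0 with hPdef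
  have hPre : ∀ t : ℂ, (P.eval t).re
      = cA - cB * ((kerPoly N w0).eval t).re := by
    intro t
    rw [hPdef]
    simp [Complex.sub_re, Complex.mul_re, Complex.ofReal_re, Complex.ofReal_im]
  have hmaj : ∀ t : ℂ, ‖t‖ = ρ → u (a + t) ≤ (P.eval t).re := by
    intro t ht
    rw [hPre, hcirc t ht]
    have hK0 : 0 ≤ Complex.normSq (t + t0) / ρ^2 := div_nonneg (Complex.normSq_nonneg _) hρ2.le
    by_cases harc : ‖t - t0‖ < η
    · -- near t0 : u < M - δ, kernel ≤ 4^N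
      have hu : u (a + t) < M - δ := by
        apply hη
        rw [Complex.dist_eq, show a + t - (a + t0) = t - t0 by ring]
        exact harc.trans_le (min_le_left _ _)
      have hKle : (Complex.normSq (t + t0) / ρ^2)^N ≤ 4^N := by
        apply pow_le_pow_left₀ hK0
        rw [hpara t ht, div_le_iff₀ hρ2]
        have := Complex.normSq_nonneg (t - t0)
        linarith
      have hcB0 : 0 ≤ cB := le_of_lt (div_pos hδ h4N)
      have hKb : cB * (Complex.normSq (t + t0) / ρ^2)^N ≤ δ := by
        calc cB * (Complex.normSq (t + t0) / ρ^2)^N ≤ cB * 4^N :=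
              mul_le_mul_of_nonneg_left hKle hcB0
          _ = δ := by rw [hcBdef]; field_simp
      have hxN : 0 ≤ δ*x^N := mul_nonneg hδ.le (pow_nonneg hx0 N)
      rw [hcAdef]
      linarith
    · -- far from t0 : kernel ≤ (4x)^N
      push_neg at harc
      have hu : u (a + t) ≤ M := hM _ (hsub0 t ht.le)
      have hKoff : (Complex.normSq (t + t0) / ρ^2)^N ≤ (4*x)^N := by
        apply pow_le_pow_left₀ hK0
        rw [hpara t ht, div_le_iff₀ hρ2]
        have hd : η^2 ≤ Complex.normSq (t - t0) := by
          rw [Complex.normSq_eq_norm_sq]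
          nlinarith [hηpos.le, harc]
        have hreq : 4*x*ρ^2 = 4*ρ^2 - η^2 := by
          rw [hxdef]; field_simp
        linarith [hd]
      have hcB0 : 0 ≤ cB := le_of_lt (div_pos hδ h4N)
      have hKb : cB * (Complex.normSq (t + t0) / ρ^2)^N ≤ δ * x^N := by
        calc cB * (Complex.normSq (t + t0) / ρ^2)^N ≤ cB * (4*x)^N :=
              mul_le_mul_of_nonneg_left hKoff hcB0
          _ = δ * x^N := by rw [hcBdef, mul_pow]; field_simp
      rw [hcAdef]
      linarith
  have hfinal := hsub a ρ hρ hball P hmaj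
  rw [hPre 0, kerPoly_eval_zero] at hfinal
  have : ((Nat.choose (2*N) N : ℂ)).re = (Nat.choose (2*N) N : ℝ) := by
    simp
  rw [this] at hfinal
  have hval : cB * (Nat.choose (2*N) N : ℝ) = δ * c0 := by
    rw [hcBdef, hc0def]; field_simp
  rw [hval] at hfinal
  have hlt2 : δ * x^N < δ * c0 := mul_lt_mul_of_pos_left hc0 hδ
  have : u a < M := by
    rw [hcAdef] at hfinal
    linarith
  exact absurd haM this.ne

lemma max_principle {s : Set ℂ} (hs : IsOpen s) (hconn : IsPreconnected s)
    (hbd : Bornology.IsBounded s) {u : ℂ → ℝ}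
    (husc : UpperSemicontinuousOn u s)
    (hsub : ∀ a r, 0 < r → Metric.closedBall a r ⊆ s →
      ∀ p : Polynomial ℂ, (∀ t : ℂ, ‖t‖ = r → u (a + t) ≤ (p.eval t).re) →
        u a ≤ (p.eval 0).re)
    {b : ℝ}
    (hbound : ∀ w ∈ frontier s, ∀ ε > 0, ∀ᶠ z in nhdsWithin w s, u z < b + ε) :
    ∀ z ∈ s, u z ≤ b := by
  rcases Set.eq_empty_or_nonempty s with hse | hne
  · intro z hz; rw [hse] at hz; exact absurd hz (Set.notMem_empty z)
  have hKc : IsCompact (closure s) := hbd.isCompact_closure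
  -- u is bounded above on s
  have hfr : ∀ w ∈ closure s, w ∉ s → w ∈ frontier s := by
    intro w hw hws
    rw [hs.frontier_eq]
    exact ⟨hw, hws⟩
  have hcover : ∀ w ∈ closure s, ∃ V : Set ℂ, IsOpen V ∧ w ∈ V ∧ ∃ m : ℝ,
      ∀ z ∈ V ∩ s, u z ≤ m := by
    intro w hw
    by_cases hws : w ∈ s
    · have hev : ∀ᶠ z in nhdsWithin w s, u z < u w + 1 := husc w hws (u w + 1) (by linarith)
      obtain ⟨V, hVo, hwV, hVsub⟩ := mem_nhdsWithin.1 hev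
      exact ⟨V, hVo, hwV, u w + 1, fun z hz => (hVsub hz).le⟩
    · have hev : ∀ᶠ z in nhdsWithin w s, u z < b + 1 := hbound w (hfr w hw hws) 1 one_pos
      obtain ⟨V, hVo, hwV, hVsub⟩ := mem_nhdsWithin.1 hev
      exact ⟨V, hVo, hwV, b + 1, fun z hz => (hVsub hz).le⟩
  choose! V hVo hwV m hm using hcover
  obtain ⟨t, htcov⟩ := hKc.elim_nhds_subcover' (fun x hx => V x) (fun x hx => (hVo x hx).mem_nhds (hwV x hx))
  have hbddA : BddAbove (u '' s) := by
    obtain ⟨M0, hM0⟩ := (t.image fun x => m x.1).exists_le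
    refine ⟨M0, ?_⟩
    rintro y ⟨z, hz, rfl⟩
    have hzc : z ∈ closure s := subset_closure hz
    obtain ⟨x, hxt, hxV⟩ := Set.mem_iUnion₂.1 (htcov hzc)
    have := hm x.1 x.2 z ⟨hxV, hz⟩
    exact this.trans (hM0 _ (Finset.mem_image_of_mem _ hxt))
  set M := sSup (u '' s) with hMdef
  have hM : ∀ z ∈ s, u z ≤ M := fun z hz => le_csSup hbddA ⟨z, hz, rfl⟩
  have key : ∀ ε : ℝ, 0 < ε → M ≤ b + ε := by
    intro ε hε
    obtain ⟨y, hymono, hytend, hymem⟩ := exists_seq_tendsto_sSup (hne.image u) hbddA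
    choose z hz hzu using fun n => hymem n
    obtain ⟨w, hwK, φ, hφ, hφt⟩ := hKc.tendsto_subseq (fun n => subset_closure (hz n))
    have hyφ : Tendsto (fun n => y (φ n)) atTop (nhds M) := hytend.comp hφ.tendsto_atTop
    have huyφ : Tendsto (fun n => u (z (φ n))) atTop (nhds M) := by
      apply hyφ.congr
      intro n
      exact (hzu (φ n)).symm
    by_cases hws : w ∈ s
    · -- the supremum is attained at w ∈ s
      have huwM : u w = M := by
        refine le_antisymm (hM w hws) ?_
        by_contra hlt
        push_neg at hlt
        set c := (u w + M)/2 with hcdef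
        have hev : ∀ᶠ ζ in nhds w, u ζ < c := usc_nhds hs husc hws (by rw [hcdef]; linarith)
        have hevn : ∀ᶠ n in atTop, u (z (φ n)) < c := hφt.eventually hev
        have hMc : M ≤ c := le_of_tendsto huyφ (hevn.mono fun n h => h.le)
        rw [hcdef] at hMc
        linarith
      -- u is identically M on s, by the clopen argument
      have hconst : ∀ ζ ∈ s, u ζ = M := by
        set A := {ζ | ζ ∈ s ∧ u ζ = M} with hAdef
        set B := {ζ | ζ ∈ s ∧ u ζ < M} with hBdef
        have hAopen : IsOpen A := by
          rw [Metric.isOpen_iff]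
          rintro a ⟨has, haM⟩
          obtain ⟨r0, hr0, hr0s⟩ := Metric.isOpen_iff.1 hs a has
          refine ⟨r0/2, by linarith, ?_⟩
          have hcb : Metric.closedBall a (r0/2) ⊆ s := by
            intro ζ hζ
            apply hr0s
            rw [Metric.mem_ball]
            rw [Metric.mem_closedBall] at hζ
            linarith
          intro β hβ
          rcases eq_or_ne β a with rfl | hne'
          · exact ⟨has, haM⟩
          · have hρpos : 0 < ‖β - a‖ := by
              rw [norm_pos_iff]
              exact sub_ne_zero.2 hne'
            have hsub2 : Metric.closedBall a (‖β - a‖) ⊆ s := by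
              apply Subset.trans _ hcb
              apply Metric.closedBall_subset_closedBall
              rw [Metric.mem_ball, Complex.dist_eq] at hβ
              exact hβ.le
            have := eq_sup_on_circle hs husc hsub hM haM hρpos hsub2 (β - a) rfl
            have hβs : β ∈ s := hsub2 (by
              rw [Metric.mem_closedBall, Complex.dist_eq])
            rw [show a + (β - a) = β by ring] at this
            exact ⟨hβs, this⟩
        have hBopen : IsOpen B := by
          rw [isOpen_iff_mem_nhds]
          rintro a ⟨has, halt⟩
          have h1 : {ζ | u ζ < M} ∈ nhds a := usc_nhds hs husc has halt
          have h2 : s ∈ nhds a := hs.mem_nhds has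
          filter_upwards [h1, h2] with ζ hζ1 hζ2
          exact ⟨hζ2, hζ1⟩
        have hsAB : s ⊆ A ∪ B := by
          intro ζ hζ
          rcases lt_or_eq_of_le (hM ζ hζ) with h | h
          · exact Or.inr ⟨hζ, h⟩
          · exact Or.inl ⟨hζ, h⟩
        intro ζ hζ
        by_contra hne'
        have hζB : (s ∩ B).Nonempty := ⟨ζ, hζ, hζ, lt_of_le_of_ne (hM ζ hζ) hne'⟩
        have hζA : (s ∩ A).Nonempty := ⟨w, hws, hws, huwM⟩
        obtain ⟨ξ, _, ⟨_, hξ1⟩, ⟨_, hξ2⟩⟩ := hconn A B hAopen hBopen hsAB hζA hζB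
        exact absurd hξ1 (ne_of_lt hξ2)
      -- now use a frontier point
      have hfne : (frontier s).Nonempty := by
        rw [nonempty_frontier_iff]
        refine ⟨hne, ?_⟩
        intro huniv
        rw [huniv] at hbd
        exact NormedSpace.unbounded_univ ℂ ℂ hbd
      obtain ⟨w0, hw0⟩ := hfne
      have hNB : (nhdsWithin w0 s).NeBot := by
        rw [← mem_closure_iff_nhdsWithin_neBot]
        exact frontier_subset_closure hw0
      have hev := (hbound w0 hw0 ε hε).and eventually_mem_nhdsWithin
      obtain ⟨ξ, hξ1, hξ2⟩ := hev.exists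
      rw [hconst ξ hξ2] at hξ1
      exact hξ1.le
    · -- w is a frontier point
      have hev := hbound w (hfr w hwK hws) ε hε
      have htend : Tendsto (fun n => z (φ n)) atTop (nhdsWithin w s) :=
        tendsto_nhdsWithin_iff.2 ⟨hφt, Filter.Eventually.of_forall (fun n => hz (φ n))⟩
      have : ∀ᶠ n in atTop, u (z (φ n)) < b + ε := htend.eventually hev
      exact le_of_tendsto huyφ (this.mono fun n h => h.le)
  intro z hz
  exact (hM z hz).trans (le_of_forall_pos_le_add key)

lemma submean_add_re_holo {s : Set ℂ} (hs : IsOpen s) {u : ℂ → ℝ}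
    (hsub : ∀ a r, 0 < r → Metric.closedBall a r ⊆ s →
      ∀ p : Polynomial ℂ, (∀ t : ℂ, ‖t‖ = r → u (a + t) ≤ (p.eval t).re) →
        u a ≤ (p.eval 0).re)
    {F : ℂ → ℂ} (hF : DifferentiableOn ℂ F s) :
    ∀ a r, 0 < r → Metric.closedBall a r ⊆ s →
      ∀ p : Polynomial ℂ,
        (∀ t : ℂ, ‖t‖ = r → u (a + t) + (F (a + t)).re ≤ (p.eval t).re) →
        u a + (F a).re ≤ (p.eval 0).re := by
  intro a r hr hball p hp
  set G : ℂ → ℂ := fun t => F (a + t) with hGdef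
  set O : Set ℂ := (fun t : ℂ => a + t) ⁻¹' s with hOdef
  have hOopen : IsOpen O := hs.preimage (continuous_const.add continuous_id)
  have habs : ∀ t : ℂ, dist (a + t) a = ‖t‖ := by
    intro t
    rw [Complex.dist_eq]
    congr 1
    ring
  have hKO : Metric.closedBall (0:ℂ) r ⊆ O := by
    intro t ht
    rw [Metric.mem_closedBall, Complex.dist_eq, sub_zero] at ht
    have : a + t ∈ Metric.closedBall a r := by rw [Metric.mem_closedBall, habs]; exact ht
    exact hball this
  obtain ⟨δ, hδ, hθ⟩ := (isCompact_closedBall (0:ℂ) r).exists_thickening_subset_open hOopen hKO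
  set R : ℝ := r + δ/2 with hRdef
  have hRr : r < R := by rw [hRdef]; linarith
  have hRpos : 0 < R := lt_trans hr hRr
  have hRsub : Metric.closedBall (0:ℂ) R ⊆ O := by
    intro ζ hζ
    rw [Metric.mem_closedBall, Complex.dist_eq, sub_zero] at hζ
    apply hθ
    rw [Metric.mem_thickening_iff]
    by_cases hcase : ‖ζ‖ ≤ r
    · exact ⟨ζ, by rw [Metric.mem_closedBall, Complex.dist_eq, sub_zero]; exact hcase, by
        simpa using hδ⟩
    · push_neg at hcase
      have hζpos : 0 < ‖ζ‖ := lt_trans hr hcase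
      refine ⟨((r / ‖ζ‖ : ℝ) : ℂ) * ζ, ?_, ?_⟩
      · rw [Metric.mem_closedBall, Complex.dist_eq, sub_zero, norm_mul, Complex.norm_real, Real.norm_eq_abs,
          _root_.abs_of_nonneg (by positivity : (0:ℝ) ≤ r / ‖ζ‖)]
        rw [div_mul_cancel₀ _ hζpos.ne']
      · rw [Complex.dist_eq]
        have : ζ - ((r / ‖ζ‖ : ℝ) : ℂ) * ζ = ((1 - r / ‖ζ‖ : ℝ) : ℂ) * ζ := by
          push_cast; ring
        rw [this, norm_mul, Complex.norm_real, Real.norm_eq_abs]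
        have h1 : r / ‖ζ‖ ≤ 1 := by
          rw [div_le_one hζpos]; exact hcase.le
        rw [_root_.abs_of_nonneg (by linarith : (0:ℝ) ≤ 1 - r / ‖ζ‖)]
        have : (1 - r / ‖ζ‖) * ‖ζ‖ = ‖ζ‖ - r := by
          field_simp
        rw [this]
        have hζ' : ‖ζ‖ ≤ r + δ/2 := by rw [← hRdef]; exact hζ
        linarith
  have hGd : DifferentiableOn ℂ G (Metric.closedBall (0:ℂ) R) := by
    apply DifferentiableOn.comp hF
    · exact (differentiable_id.const_add a).differentiableOn
    · intro t ht
      exact hRsub ht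
  have hRnn : ((R.toNNReal : ℝ)) = R := Real.coe_toNNReal R hRpos.le
  have hGd' : DifferentiableOn ℂ G (Metric.closedBall (0:ℂ) (R.toNNReal : ℝ)) := by
    rw [hRnn]; exact hGd
  have hps := hGd'.hasFPowerSeriesOnBall (by
    rw [← Real.toNNReal_pos] at hRpos
    exact hRpos)
  set pser := cauchyPowerSeries G 0 (R.toNNReal : ℝ) with hpserdef
  set r'' : ℝ := (r + R)/2 with hr''def
  have hrr'' : r < r'' := by rw [hr''def]; linarith
  have hr''R : r'' < R := by rw [hr''def]; linarith
  have hr''pos : 0 < r'' := lt_trans hr hrr''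
  have hUnif := hps.tendstoUniformlyOn (r' := r''.toNNReal) (by
    rw [ENNReal.coe_lt_coe]
    rw [Real.toNNReal_lt_toNNReal_iff hRpos]
    exact hr''R)
  rw [Metric.tendstoUniformlyOn_iff] at hUnif
  -- it suffices to prove the bound up to ε
  have hgoal : ∀ ε : ℝ, 0 < ε → u a + (F a).re ≤ (p.eval 0).re + ε := by
    intro ε hε
    obtain ⟨n, hn, hn1⟩ := ((hUnif ε hε).and (eventually_ge_atTop 1)).exists
    set Tq : Polynomial ℂ := ∑ k ∈ Finset.range n, Polynomial.C (pser.coeff k) * Polynomial.X ^ k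
      with hTqdef
    have hTeval : ∀ y : ℂ, Tq.eval y = pser.partialSum n y := by
      intro y
      rw [hTqdef, Polynomial.eval_finset_sum, FormalMultilinearSeries.partialSum]
      apply Finset.sum_congr rfl
      intro k _
      rw [pser.apply_eq_pow_smul_coeff, smul_eq_mul, Polynomial.eval_mul, Polynomial.eval_C,
        Polynomial.eval_pow, Polynomial.eval_X, mul_comm]
    have hdistlt : ∀ t : ℂ, ‖t‖ = r → ‖G t - Tq.eval t‖ < ε := by
      intro t ht
      have htmem : t ∈ Metric.ball (0:ℂ) (r''.toNNReal : ℝ) := by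
        rw [Metric.mem_ball, Complex.dist_eq, sub_zero, ht,
          Real.coe_toNNReal _ hr''pos.le]
        exact hrr''
      have := hn t htmem
      rw [Complex.dist_eq] at this
      rw [hTeval]
      have h0 : G (0 + t) = G t := by rw [zero_add]
      rw [h0] at this
      exact this
    -- the comparison polynomial
    set q : Polynomial ℂ := p - Tq + Polynomial.C ((ε : ℝ) : ℂ) with hqdef
    have hmaj : ∀ t : ℂ, ‖t‖ = r → u (a + t) ≤ (q.eval t).re := by
      intro t ht
      have h1 : u (a + t) + (G t).re ≤ (p.eval t).re := hp t ht
      have h2 : (Tq.eval t).re - (G t).re ≤ ε := by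
        have := hdistlt t ht
        have habs2 : |(G t - Tq.eval t).re| ≤ ‖G t - Tq.eval t‖ :=
          Complex.abs_re_le_norm _
        rw [Complex.sub_re] at habs2
        have := abs_le.1 habs2
        linarith [this.1, this.2, hdistlt t ht]
      rw [hqdef]
      simp only [Polynomial.eval_add, Polynomial.eval_sub, Polynomial.eval_C,
        Complex.add_re, Complex.sub_re, Complex.ofReal_re]
      linarith
    have hfin := hsub a r hr hball q hmaj
    rw [hqdef] at hfin
    simp only [Polynomial.eval_add, Polynomial.eval_sub, Polynomial.eval_C,
      Complex.add_re, Complex.sub_re, Complex.ofReal_re] at hfin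
    -- Tq.eval 0 = pser.coeff 0 = G 0 = F a
    have hT0 : Tq.eval 0 = pser.coeff 0 := by
      rw [hTqdef, Polynomial.eval_finset_sum]
      rw [Finset.sum_eq_single 0]
      · simp
      · intro k hk hkne
        simp [zero_pow hkne]
      · intro h
        exact absurd (Finset.mem_range.2 (by omega)) h
    have hc0 : pser.coeff 0 = G 0 := by
      have := hps.hasFPowerSeriesAt.coeff_zero (fun _ => (1:ℂ))
      rw [← this]
      rfl
    have hG0 : G 0 = F a := by rw [hGdef]; simp
    rw [hT0, hc0, hG0] at hfin
    linarith
  have := le_of_forall_pos_le_add hgoal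
  linarith [this]

/-! ### The candidate extremal function -/

def phiM (z : ℂ) : ℂ := (1 + z)/(1 - z)

def hext (z : ℂ) : ℝ := (2/Real.pi) * |Complex.arg (phiM z)|

lemma abs_lt_one {z : ℂ} (hz : z ∈ Metric.ball (0:ℂ) 1) : ‖z‖ < 1 := by
  rwa [Metric.mem_ball, Complex.dist_eq, sub_zero] at hz

lemma one_sub_ne {z : ℂ} (hz : z ∈ Metric.ball (0:ℂ) 1) : (1:ℂ) - z ≠ 0 := by
  intro h
  have hz1 : z = 1 := by linear_combination -h
  have := abs_lt_one hz
  rw [hz1] at this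
  simp at this

lemma normSq_one_sub_pos {z : ℂ} (hz : z ∈ Metric.ball (0:ℂ) 1) :
    0 < Complex.normSq (1 - z) := Complex.normSq_pos.2 (one_sub_ne hz)

lemma re_phiM {z : ℂ} : (phiM z).re
    = (1 - Complex.normSq z)/Complex.normSq (1 - z) := by
  rw [phiM, Complex.div_re]
  simp only [Complex.add_re, Complex.add_im, Complex.sub_re, Complex.sub_im, Complex.one_re,
    Complex.one_im, Complex.normSq_apply]
  ring

lemma im_phiM {z : ℂ} : (phiM z).im = 2*z.im/Complex.normSq (1 - z) := by
  rw [phiM, Complex.div_im]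
  simp only [Complex.add_re, Complex.add_im, Complex.sub_re, Complex.sub_im, Complex.one_re,
    Complex.one_im, Complex.normSq_apply]
  ring

lemma re_phiM_pos {z : ℂ} (hz : z ∈ Metric.ball (0:ℂ) 1) : 0 < (phiM z).re := by
  rw [re_phiM]
  apply div_pos
  · have h1 : Complex.normSq z < 1 := by
      rw [Complex.normSq_eq_norm_sq]
      have := abs_lt_one hz
      nlinarith [norm_nonneg z]
    linarith
  · exact normSq_one_sub_pos hz

lemma phiM_slit {z : ℂ} (hz : z ∈ Metric.ball (0:ℂ) 1) : phiM z ∈ Complex.slitPlane :=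
  Complex.mem_slitPlane_iff.2 (Or.inl (re_phiM_pos hz))

lemma diffAt_phiM {z : ℂ} (hz : z ∈ Metric.ball (0:ℂ) 1) : DifferentiableAt ℂ phiM z := by
  apply DifferentiableAt.div
  · exact (differentiable_id.const_add 1).differentiableAt
  · apply DifferentiableAt.const_sub
    exact differentiableAt_id
  · exact one_sub_ne hz

lemma contAt_hext {z : ℂ} (hz : z ∈ Metric.ball (0:ℂ) 1) : ContinuousAt hext z := by
  have h1 : ContinuousAt (fun z => Complex.arg (phiM z)) z :=
    (Complex.continuousAt_arg (phiM_slit hz)).comp (diffAt_phiM hz).continuousAt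
  exact (continuous_const.continuousAt).mul (h1.abs)

lemma hext_nonneg (z : ℂ) : 0 ≤ hext z := by
  apply mul_nonneg
  · positivity
  · exact abs_nonneg _

lemma hext_le_one {z : ℂ} (hz : z ∈ Metric.ball (0:ℂ) 1) : hext z ≤ 1 := by
  have h1 : |Complex.arg (phiM z)| ≤ Real.pi/2 :=
    Complex.abs_arg_le_pi_div_two_iff.2 (re_phiM_pos hz).le
  rw [hext]
  have hπ : 0 < Real.pi := Real.pi_pos
  calc (2/Real.pi) * |Complex.arg (phiM z)| ≤ (2/Real.pi) * (Real.pi/2) := by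
        apply mul_le_mul_of_nonneg_left h1 (by positivity)
    _ = 1 := by field_simp

lemma hext_zero_on_A {z : ℂ} (hz : z.im = 0 ∧ -1 < z.re ∧ z.re < 1) : hext z = 0 := by
  obtain ⟨him, h1, h2⟩ := hz
  have hzre : z = ((z.re : ℝ) : ℂ) := by
    apply Complex.ext <;> simp [him]
  have hphi : phiM z = (((1 + z.re)/(1 - z.re) : ℝ) : ℂ) := by
    rw [phiM, hzre]
    push_cast
    rfl
  rw [hext, hphi, Complex.arg_ofReal_of_nonneg (by
    apply div_nonneg <;> linarith)]
  simp

lemma re_aux (σ c : ℝ) (w : ℂ) :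
    (((σ:ℂ)) * (-Complex.I * ((c:ℝ):ℂ) * w)).re = σ * (c * w.im) := by
  simp [Complex.mul_re, Complex.mul_im]

/-- maximum principle for real parts via the exponential trick -/
lemma re_le_zero_of_boundary {r : ℝ} (hr : 0 < r) {f : ℂ → ℂ}
    (hd : DiffContOnCl ℂ f (Metric.ball (0:ℂ) r))
    (hb : ∀ t : ℂ, ‖t‖ = r → (f t).re ≤ 0) : (f 0).re ≤ 0 := by
  have hbd : Bornology.IsBounded (Metric.ball (0:ℂ) r) := Metric.isBounded_ball
  have hd2 : DiffContOnCl ℂ (fun z => Complex.exp (f z)) (Metric.ball (0:ℂ) r) :=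
    ⟨Complex.differentiable_exp.comp_differentiableOn hd.differentiableOn,
     Complex.continuous_exp.comp_continuousOn hd.continuousOn⟩
  have hfr : ∀ ζ ∈ frontier (Metric.ball (0:ℂ) r), ‖Complex.exp (f ζ)‖ ≤ 1 := by
    intro ζ hζ
    rw [frontier_ball 0 hr.ne'] at hζ
    have habs : ‖ζ‖ = r := by
      rw [Metric.mem_sphere, Complex.dist_eq, sub_zero] at hζ
      exact hζ
    rw [Complex.norm_exp]
    exact Real.exp_le_one_iff.2 (hb ζ habs)
  have h0 : (0:ℂ) ∈ closure (Metric.ball (0:ℂ) r) := subset_closure (Metric.mem_ball_self hr)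
  have := Complex.norm_le_of_forall_mem_frontier_norm_le hbd hd2 hfr h0
  rw [Complex.norm_exp] at this
  exact Real.exp_le_one_iff.1 this

lemma hext_psh : PlurisubharmonicOn (fun w => ((hext w : ℝ) : EReal)) (Metric.ball (0:ℂ) 1) := by
  constructor
  · -- upper semicontinuity
    apply ContinuousOn.upperSemicontinuousOn
    apply continuous_coe_real_ereal.comp_continuousOn
    intro z hz
    exact (contAt_hext hz).continuousWithinAt
  · intro a v r hr hcirc p hp
    rw [EReal.coe_le_coe_iff]
    have hp' : ∀ t : ℂ, ‖t‖ = r → hext (a + t * v) ≤ (p.eval t).re := by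
      intro t ht
      have := hp t ht
      rw [EReal.coe_le_coe_iff] at this
      rwa [smul_eq_mul] at this
    have ha : a ∈ Metric.ball (0:ℂ) 1 := by
      have := hcirc 0 (by simp [hr.le])
      simpa using this
    have hcirc' : ∀ t : ℂ, ‖t‖ ≤ r → a + t * v ∈ Metric.ball (0:ℂ) 1 := by
      intro t ht
      have := hcirc t ht
      rwa [smul_eq_mul] at this
    have main : ∀ σ : ℝ, σ = 1 ∨ σ = -1 →
        σ * ((2/Real.pi) * Complex.arg (phiM a)) ≤ (p.eval 0).re := by
      intro σ hσ
      set f : ℂ → ℂ := fun t =>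
        ((σ:ℂ)) * (-Complex.I * ((2/Real.pi : ℝ):ℂ) * Complex.log (phiM (a + t * v)))
          - p.eval t with hfdef
      set O : Set ℂ := {t : ℂ | a + t * v ∈ Metric.ball (0:ℂ) 1} with hOdef
      have hOopen : IsOpen O :=
        Metric.isOpen_ball.preimage (by continuity)
      have hfO : DifferentiableOn ℂ f O := by
        apply DifferentiableOn.sub
        · apply DifferentiableOn.const_mul
          apply DifferentiableOn.const_mul
          intro t ht
          apply DifferentiableAt.differentiableWithinAt
          have hmem : a + t * v ∈ Metric.ball (0:ℂ) 1 := ht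
          have h1 : DifferentiableAt ℂ (fun t : ℂ => a + t * v) t :=
            ((differentiable_id.mul_const v).const_add a).differentiableAt
          have h2 : DifferentiableAt ℂ phiM (a + t * v) := diffAt_phiM hmem
          have h3 : DifferentiableAt ℂ Complex.log (phiM (a + t * v)) :=
            Complex.differentiableAt_log (phiM_slit hmem)
          exact (h3.comp _ h2).comp t h1
        · exact (Polynomial.differentiable p).differentiableOn
      have hsubO : Metric.closedBall (0:ℂ) r ⊆ O := by
        intro t ht
        rw [Metric.mem_closedBall, Complex.dist_eq, sub_zero] at ht
        exact hcirc' t ht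
      have hdc : DiffContOnCl ℂ f (Metric.ball (0:ℂ) r) := by
        constructor
        · exact hfO.mono ((Metric.ball_subset_closedBall).trans hsubO)
        · rw [closure_ball 0 hr.ne']
          exact hfO.continuousOn.mono hsubO
      have hfb : ∀ t : ℂ, ‖t‖ = r → (f t).re ≤ 0 := by
        intro t ht
        rw [hfdef]
        simp only [Complex.sub_re]
        rw [re_aux]
        rw [Complex.log_im]
        have harg : σ * ((2/Real.pi) * Complex.arg (phiM (a + t * v)))
            ≤ hext (a + t * v) := by
          rw [hext]
          rcases hσ with rfl | rfl
          · rw [one_mul]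
            apply mul_le_mul_of_nonneg_left (le_abs_self _) (by positivity)
          · rw [neg_one_mul]
            rw [← mul_neg]
            apply mul_le_mul_of_nonneg_left (neg_le_abs _) (by positivity)
        have := (harg.trans (hp' t ht))
        linarith
      have hconc := re_le_zero_of_boundary hr hdc hfb
      rw [hfdef] at hconc
      simp only [Complex.sub_re] at hconc
      rw [re_aux, Complex.log_im] at hconc
      have h0 : a + 0 * v = a := by ring
      rw [h0] at hconc
      linarith
    have h1 := main 1 (Or.inl rfl)
    have h2 := main (-1) (Or.inr rfl)
    rw [one_mul] at h1
    rw [neg_one_mul] at h2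
    rw [hext, show (2/Real.pi) * |(phiM a).arg| = |(2/Real.pi) * (phiM a).arg| by
      rw [abs_mul, _root_.abs_of_nonneg (by positivity : (0:ℝ) ≤ 2/Real.pi)]]
    exact abs_le.2 ⟨by linarith, h1⟩

lemma log_le_log2 {x : ℝ} (h0 : 0 ≤ x) (h : x ≤ 2) : Real.log x ≤ Real.log 2 := by
  rcases h0.eq_or_lt with h0' | h0'
  · rw [← h0', Real.log_zero]
    exact Real.log_nonneg (by norm_num)
  · exact Real.log_le_log h0' h

lemma usc_real_of_ereal {s : Set ℂ} {u : ℂ → ℝ}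
    (h : UpperSemicontinuousOn (fun w => ((u w : ℝ) : EReal)) s) :
    UpperSemicontinuousOn u s := by
  intro x hx y hy
  have hy' : ((u x : ℝ) : EReal) < ((y : ℝ) : EReal) := EReal.coe_lt_coe_iff.2 hy
  have h2 := h x hx ((y : ℝ) : EReal) hy'
  apply h2.mono
  intro z hz
  have hz' : ((u z : ℝ) : EReal) < ((y : ℝ) : EReal) := hz
  exact EReal.coe_lt_coe_iff.1 hz'

lemma usc_add_cont {s : Set ℂ} {u c : ℂ → ℝ} (hu : UpperSemicontinuousOn u s)
    (hc : ContinuousOn c s) : UpperSemicontinuousOn (fun z => u z + c z) s :=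
  hu.add hc.upperSemicontinuousOn

lemma abs_sub_one_le {z : ℂ} (hz : z ∈ Metric.ball (0:ℂ) 1) :
    ‖z - 1‖ ≤ 2 := by
  have h := norm_sub_le_norm_sub_add_norm_sub z 0 1
  simp only [sub_zero, zero_sub, norm_neg] at h
  have := abs_lt_one hz
  simp only [norm_one] at h
  linarith

lemma abs_add_one_le {z : ℂ} (hz : z ∈ Metric.ball (0:ℂ) 1) :
    ‖z + 1‖ ≤ 2 := by
  have h := norm_add_le z 1
  have := abs_lt_one hz
  simp only [norm_one] at h
  linarith

lemma competitor_le_hext {u : ℂ → ℝ}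
    (hpsh : PlurisubharmonicOn (fun w => ((u w : ℝ) : EReal)) (Metric.ball (0:ℂ) 1))
    (hle1 : ∀ w ∈ Metric.ball (0:ℂ) 1, u w ≤ 1)
    (hle0 : ∀ w ∈ {z : ℂ | z.im = 0 ∧ -1 < z.re ∧ z.re < 1}, u w ≤ 0)
    {ζ : ℂ} (hζ : ζ ∈ Metric.ball (0:ℂ) 1) : u ζ ≤ hext ζ := by
  obtain ⟨huscE, hsubE⟩ := hpsh
  have husc : UpperSemicontinuousOn u (Metric.ball (0:ℂ) 1) := usc_real_of_ereal huscE
  have hsubD : ∀ (a : ℂ) (r : ℝ), 0 < r → Metric.closedBall a r ⊆ Metric.ball (0:ℂ) 1 →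
      ∀ p : Polynomial ℂ, (∀ t : ℂ, ‖t‖ = r → u (a + t) ≤ (p.eval t).re) →
        u a ≤ (p.eval 0).re := by
    intro a r hr hball p hp
    have h := hsubE a 1 r hr (fun t ht => by
      rw [smul_eq_mul, mul_one]
      apply hball
      rw [Metric.mem_closedBall, Complex.dist_eq]
      simpa using ht) p (fun t ht => by
        rw [smul_eq_mul, mul_one]
        exact EReal.coe_le_coe_iff.2 (hp t ht))
    exact EReal.coe_le_coe_iff.1 h
  rcases eq_or_ne ζ.im 0 with him | him
  · have hmem : ζ ∈ {z : ℂ | z.im = 0 ∧ -1 < z.re ∧ z.re < 1} := by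
      refine ⟨him, ?_, ?_⟩
      · have h2 : |ζ.re| ≤ ‖ζ‖ := Complex.abs_re_le_norm ζ
        have h3 := abs_lt.1 (lt_of_le_of_lt h2 (abs_lt_one hζ))
        exact h3.1
      · have h2 : |ζ.re| ≤ ‖ζ‖ := Complex.abs_re_le_norm ζ
        have h3 := abs_lt.1 (lt_of_le_of_lt h2 (abs_lt_one hζ))
        exact h3.2
    exact (hle0 ζ hmem).trans (hext_nonneg ζ)
  set σ : ℝ := if 0 < ζ.im then 1 else -1 with hσdef
  have hσ : σ = 1 ∨ σ = -1 := by rw [hσdef]; split <;> simp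
  have hσim : 0 < σ * ζ.im := by
    rw [hσdef]
    split
    · simpa
    · push_neg at *
      rename_i hle
      have : ζ.im < 0 := lt_of_le_of_ne hle him
      nlinarith
  set Ω : Set ℂ := Metric.ball (0:ℂ) 1 ∩ {z : ℂ | 0 < σ * z.im} with hΩdef
  have hΩopen : IsOpen Ω := Metric.isOpen_ball.inter (isOpen_lt continuous_const
    (continuous_const.mul Complex.continuous_im))
  have hΩconv : Convex ℝ Ω := by
    apply (convex_ball (0:ℂ) 1).inter
    rcases hσ with hσ1 | hσ1
    · have : {z : ℂ | 0 < σ * z.im} = {z : ℂ | 0 < z.im} := by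
        ext z; rw [hσ1]; simp
      rw [this]
      exact convex_halfSpace_im_gt 0
    · have : {z : ℂ | 0 < σ * z.im} = {z : ℂ | z.im < 0} := by
        ext z
        rw [hσ1]
        constructor <;> (intro h; simp at *; linarith)
      rw [this]
      exact convex_halfSpace_im_lt 0
  have hΩbdd : Bornology.IsBounded Ω := Metric.isBounded_ball.subset Set.inter_subset_left
  have hζΩ : ζ ∈ Ω := ⟨hζ, hσim⟩
  have hπ := Real.pi_pos
  -- sign identity on Ω
  have hsgn : ∀ z ∈ Ω, σ * (phiM z).arg = |(phiM z).arg| := by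
    rintro z ⟨hzD, hzim⟩
    have hns := normSq_one_sub_pos hzD
    rcases hσ with hσ1 | hσ1 <;> rw [hσ1] at hzim ⊢
    · simp only [Set.mem_setOf_eq, one_mul] at hzim
      rw [one_mul]
      have himpos : 0 < (phiM z).im := by
        rw [im_phiM]
        positivity
      rw [_root_.abs_of_nonneg (Complex.arg_nonneg_iff.2 himpos.le)]
    · simp only [Set.mem_setOf_eq, neg_one_mul] at hzim
      rw [neg_one_mul]
      have hzim' : z.im < 0 := by linarith
      have himneg : (phiM z).im < 0 := by
        rw [im_phiM]
        apply div_neg_of_neg_of_pos (by linarith) hns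
      rw [_root_.abs_of_neg (Complex.arg_neg_iff.2 himneg)]
  have hmain : ∀ ε : ℝ, 0 < ε → u ζ ≤ hext ζ
      + ε * (2*Real.log 2 - Real.log (‖ζ - 1‖) - Real.log (‖ζ + 1‖)) := by
    intro ε hε
    set Fε : ℂ → ℂ := fun z =>
      ((σ:ℂ)) * (Complex.I * ((2/Real.pi : ℝ):ℂ) * Complex.log (phiM z))
        + (ε:ℂ) * (Complex.log (z - 1) + Complex.log (z + 1)) with hFdef
    have hFre : ∀ z : ℂ, (Fε z).re = -(σ * ((2/Real.pi) * (phiM z).arg))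
        + ε * (Real.log (‖z - 1‖) + Real.log (‖z + 1‖)) := by
      intro z
      rw [hFdef]
      simp only [Complex.add_re]
      congr 1
      · have hneg : ((σ:ℂ)) * (Complex.I * ((2/Real.pi : ℝ):ℂ) * Complex.log (phiM z))
            = -(((σ:ℂ)) * (-Complex.I * ((2/Real.pi : ℝ):ℂ) * Complex.log (phiM z))) := by
          ring
        rw [hneg, Complex.neg_re, re_aux, Complex.log_im]
      · have : ((ε:ℂ) * (Complex.log (z-1) + Complex.log (z+1))).re
            = ε * ((Complex.log (z-1)).re + (Complex.log (z+1)).re) := by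
          simp [Complex.mul_re, Complex.add_re, Complex.add_im]
        rw [this, Complex.log_re, Complex.log_re]
    -- differentiability of Fε on Ω
    have hFdiff : DifferentiableOn ℂ Fε Ω := by
      rw [hFdef]
      apply DifferentiableOn.add
      · apply DifferentiableOn.const_mul
        apply DifferentiableOn.const_mul
        rintro z ⟨hzD, _⟩
        apply DifferentiableAt.differentiableWithinAt
        exact (Complex.differentiableAt_log (phiM_slit hzD)).comp z (diffAt_phiM hzD)
      · apply DifferentiableOn.const_mul
        apply DifferentiableOn.add
        · rintro z ⟨hzD, hzim⟩
          apply DifferentiableAt.differentiableWithinAt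
          have hslit : z - 1 ∈ Complex.slitPlane := by
            apply Complex.mem_slitPlane_iff.2
            right
            simp only [Complex.sub_im, Complex.one_im, sub_zero]
            simp only [Set.mem_setOf_eq] at hzim
            intro h
            rw [h, mul_zero] at hzim
            exact lt_irrefl 0 hzim
          exact (Complex.differentiableAt_log hslit).comp z
            (differentiable_id.sub_const 1).differentiableAt
        · rintro z ⟨hzD, hzim⟩
          apply DifferentiableAt.differentiableWithinAt
          have hslit : z + 1 ∈ Complex.slitPlane := by
            apply Complex.mem_slitPlane_iff.2
            right
            simp only [Complex.add_im, Complex.one_im, add_zero]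
            simp only [Set.mem_setOf_eq] at hzim
            intro h
            rw [h, mul_zero] at hzim
            exact lt_irrefl 0 hzim
          exact (Complex.differentiableAt_log hslit).comp z
            (differentiable_id.add_const 1).differentiableAt
    -- value of v on Ω
    have hvΩ : ∀ z ∈ Ω, u z + (Fε z).re = u z - hext z
        + ε * (Real.log (‖z - 1‖) + Real.log (‖z + 1‖)) := by
      intro z hz
      rw [hFre z, hext]
      have hre : σ * ((2/Real.pi) * (phiM z).arg) = (2/Real.pi) * |(phiM z).arg| := by
        rw [← hsgn z hz]; ring
      rw [hre]
      ring
    -- the Re Fε bound on Ω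
    have hFbd : ∀ z ∈ Ω, (Fε z).re ≤ -( σ * ((2/Real.pi) * (phiM z).arg)) + ε * (2*Real.log 2) := by
      intro z hz
      rw [hFre z]
      have h1 : Real.log (‖z - 1‖) ≤ Real.log 2 :=
        log_le_log2 (norm_nonneg _) (abs_sub_one_le hz.1)
      have h2 : Real.log (‖z + 1‖) ≤ Real.log 2 :=
        log_le_log2 (norm_nonneg _) (abs_add_one_le hz.1)
      have : Real.log (‖z - 1‖) + Real.log (‖z + 1‖) ≤ 2*Real.log 2 := by
        linarith
      nlinarith [hε.le]
    -- upper semicontinuity of v on Ω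
    have huscΩ : UpperSemicontinuousOn (fun z => u z + (Fε z).re) Ω :=
      usc_add_cont (husc.mono Set.inter_subset_left)
        (Complex.continuous_re.comp_continuousOn hFdiff.continuousOn)
    -- submean property of v on Ω
    have hsubΩ := submean_add_re_holo hΩopen
      (fun a r hr hball => hsubD a r hr (hball.trans Set.inter_subset_left)) hFdiff
    -- frontier containment
    have hfrsub : frontier Ω ⊆ Metric.closedBall (0:ℂ) 1 ∩ {z : ℂ | 0 ≤ σ * z.im} := by
      have hcl : closure Ω ⊆ Metric.closedBall (0:ℂ) 1 ∩ {z : ℂ | 0 ≤ σ * z.im} := by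
        apply closure_minimal
        · intro z hz
          have hz2 : 0 < σ * z.im := hz.2
          exact ⟨Metric.ball_subset_closedBall hz.1, hz2.le⟩
        · exact IsClosed.inter Metric.isClosed_closedBall
            (isClosed_le continuous_const (continuous_const.mul Complex.continuous_im))
      exact frontier_subset_closure.trans hcl
    -- boundary estimates
    have hbound : ∀ w ∈ frontier Ω, ∀ ε' > 0, ∀ᶠ z in nhdsWithin w Ω,
        u z + (Fε z).re < ε * (2*Real.log 2) + ε' := by
      intro w hw ε' hε'
      obtain ⟨hwcb, hwim0'⟩ := hfrsub hw
      have hwim : 0 ≤ σ * w.im := hwim0'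
      have hwabs : ‖w‖ ≤ 1 := by
        rwa [Metric.mem_closedBall, Complex.dist_eq, sub_zero] at hwcb
      have hwnotΩ : w ∉ Ω := by
        intro hmem
        rw [hΩopen.frontier_eq] at hw
        exact hw.2 hmem
      by_cases hw1 : w = 1 ∨ w = -1
      · -- corner points ±1 : the log barrier tends to -∞
        have key : ∀ᶠ z in nhdsWithin w Ω,
            ε * (Real.log (‖z - 1‖) + Real.log (‖z + 1‖))
              < ε * (2*Real.log 2) + ε' - 1 := by
          have hgen : ∀ c : ℂ, w = c → (∀ z ∈ Ω, ‖z - c‖ ≠ 0) →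
              Tendsto (fun z : ℂ => Real.log (‖z - c‖))
                (nhdsWithin w Ω) atBot := by
            intro c hwc hne
            apply Real.tendsto_log_nhdsNE_zero.comp
            rw [tendsto_nhdsWithin_iff]
            constructor
            · have hcont : Tendsto (fun z : ℂ => ‖z - c‖) (nhds w) (nhds 0) := by
                have h : Continuous (fun z : ℂ => ‖z - c‖) :=
                  continuous_norm.comp (continuous_id.sub continuous_const)
                rw [hwc]
                simpa using h.tendsto c
              exact hcont.mono_left nhdsWithin_le_nhds
            · apply eventually_nhdsWithin_of_forall
              intro z hz
              exact hne z hz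
          have hneq : ∀ z ∈ Ω, z ≠ 1 ∧ z ≠ -1 := by
            intro z hz
            constructor <;> (intro h; rw [h] at hz; have := abs_lt_one hz.1; simp at this)
          rcases hw1 with rfl | rfl
          · -- w = 1
            have htd : Tendsto (fun z : ℂ => Real.log (‖z - 1‖))
                (nhdsWithin 1 Ω) atBot := by
              apply hgen 1 rfl
              intro z hz
              rw [ne_eq, norm_eq_zero, sub_eq_zero]
              exact (hneq z hz).1
            have htd2 : Tendsto (fun z : ℂ => ε * Real.log (‖z - 1‖))
                (nhdsWithin 1 Ω) atBot := htd.const_mul_atBot hε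
            have hev1 := htd2.eventually
              (eventually_lt_atBot (ε * (2*Real.log 2) + ε' - 1 - ε * Real.log 2))
            filter_upwards [hev1, eventually_mem_nhdsWithin] with z hz1 hzΩ
            have hb2 : Real.log (‖z + 1‖) ≤ Real.log 2 :=
              log_le_log2 (norm_nonneg _) (abs_add_one_le hzΩ.1)
            have hb2' : ε * Real.log (‖z+1‖) ≤ ε * Real.log 2 :=
              mul_le_mul_of_nonneg_left hb2 hε.le
            rw [mul_add]
            linarith
          · -- w = -1
            have htd : Tendsto (fun z : ℂ => Real.log (‖z + 1‖))
                (nhdsWithin (-1) Ω) atBot := by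
              have := hgen (-1) rfl (by
                intro z hz
                rw [ne_eq, norm_eq_zero, sub_neg_eq_add]
                intro h
                exact (hneq z hz).2 (by linear_combination h))
              apply this.congr'
              apply eventually_nhdsWithin_of_forall
              intro z _
              simp [sub_neg_eq_add]
            have htd2 : Tendsto (fun z : ℂ => ε * Real.log (‖z + 1‖))
                (nhdsWithin (-1) Ω) atBot := htd.const_mul_atBot hε
            have hev1 := htd2.eventually
              (eventually_lt_atBot (ε * (2*Real.log 2) + ε' - 1 - ε * Real.log 2))
            filter_upwards [hev1, eventually_mem_nhdsWithin] with z hz1 hzΩ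
            have hb2 : Real.log (‖z - 1‖) ≤ Real.log 2 :=
              log_le_log2 (norm_nonneg _) (abs_sub_one_le hzΩ.1)
            have hb2' : ε * Real.log (‖z-1‖) ≤ ε * Real.log 2 :=
              mul_le_mul_of_nonneg_left hb2 hε.le
            rw [mul_add]
            linarith
        filter_upwards [key, eventually_mem_nhdsWithin] with z hzkey hzΩ
        rw [hvΩ z hzΩ]
        have hu1 : u z ≤ 1 := hle1 z hzΩ.1
        have hh0 : 0 ≤ hext z := hext_nonneg z
        linarith
      · push_neg at hw1
        by_cases hwD : ‖w‖ < 1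
        · -- w is an interior real point, i.e. w ∈ A
          have hwD' : w ∈ Metric.ball (0:ℂ) 1 := by
            rwa [Metric.mem_ball, Complex.dist_eq, sub_zero]
          have hwim0 : w.im = 0 := by
            rcases lt_or_eq_of_le hwim with h | h
            · exact absurd ⟨hwD', h⟩ hwnotΩ
            · rcases hσ with h1 | h1 <;> rw [h1] at h <;> linarith [h]
          have hwA : w ∈ {z : ℂ | z.im = 0 ∧ -1 < z.re ∧ z.re < 1} := by
            have h3 := abs_lt.1 ((Complex.abs_re_le_norm w).trans_lt hwD)
            exact ⟨hwim0, h3.1, h3.2⟩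
          have hu0 : u w ≤ 0 := hle0 w hwA
          have hev : ∀ᶠ z in nhdsWithin w (Metric.ball (0:ℂ) 1), u z < ε' :=
            husc w hwD' ε' (by linarith)
          have hev' : ∀ᶠ z in nhdsWithin w Ω, u z < ε' :=
            hev.filter_mono (nhdsWithin_mono w Set.inter_subset_left)
          filter_upwards [hev', eventually_mem_nhdsWithin] with z hz1 hzΩ
          have hF := hFbd z hzΩ
          have habs0 : σ * ((2/Real.pi) * (phiM z).arg) = (2/Real.pi)*|(phiM z).arg| := by
            rw [← hsgn z hzΩ]; ring
          have hnn : 0 ≤ (2/Real.pi)*|(phiM z).arg| :=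
            mul_nonneg (by positivity) (abs_nonneg _)
          rw [habs0] at hF
          linarith
        · -- w is on the unit circle, w ≠ ±1
          have hwabs1 : ‖w‖ = 1 := le_antisymm hwabs (not_lt.1 hwD)
          have hwim0 : w.im ≠ 0 := by
            intro h0
            have hwre : w = ((w.re : ℝ) : ℂ) := by
              apply Complex.ext
              · simp
              · simp [h0]
            have habsre : |w.re| = 1 := by
              rw [hwre, Complex.norm_real, Real.norm_eq_abs] at hwabs1
              exact hwabs1
            rcases abs_eq (by norm_num : (0:ℝ) ≤ 1) |>.1 habsre with h | h
            · exact hw1.1 (by rw [hwre, h]; norm_num)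
            · exact hw1.2 (by rw [hwre, h]; norm_num)
          have hσwim : 0 < σ * w.im := by
            rcases lt_or_eq_of_le hwim with h | h
            · exact h
            · exfalso
              rcases hσ with h1 | h1 <;> rw [h1] at h <;>
                (first | exact hwim0 (by linarith) | exact hwim0 (by linarith))
          have h1w : (1:ℂ) - w ≠ 0 := by
            intro h
            exact hw1.1 (by linear_combination -h)
          have hnsw : 0 < Complex.normSq (1 - w) := Complex.normSq_pos.2 h1w
          have hrew : (phiM w).re = 0 := by
            rw [re_phiM, Complex.normSq_eq_norm_sq, hwabs1]
            norm_num
          have himw_ne : (phiM w).im ≠ 0 := by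
            rw [im_phiM]
            apply div_ne_zero _ hnsw.ne'
            intro h
            exact hwim0 (by linarith)
          have hslitw : phiM w ∈ Complex.slitPlane :=
            Complex.mem_slitPlane_iff.2 (Or.inr himw_ne)
          have hphicont : ContinuousAt phiM w := by
            apply ContinuousAt.div
            · exact (continuous_const.add continuous_id).continuousAt
            · exact (continuous_const.sub continuous_id).continuousAt
            · exact h1w
          have hgcont : ContinuousAt (fun z => σ * ((2/Real.pi) * (phiM z).arg)) w := by
            apply continuousAt_const.mul
            apply continuousAt_const.mul
            exact (Complex.continuousAt_arg hslitw).comp hphicont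
          have hgval : σ * ((2/Real.pi) * (phiM w).arg) = 1 := by
            have himw : (phiM w).im = 2*w.im/Complex.normSq (1-w) := im_phiM
            rcases hσ with h1 | h1 <;> rw [h1] at hσwim ⊢
            · rw [one_mul] at hσwim
              have himpos : 0 < (phiM w).im := by
                rw [himw]; positivity
              have harg : (phiM w).arg = Real.pi/2 :=
                Complex.arg_eq_pi_div_two_iff.2 ⟨hrew, himpos⟩
              rw [harg]
              field_simp
            · rw [neg_one_mul] at hσwim
              have hwim' : w.im < 0 := by linarith
              have himneg : (phiM w).im < 0 := by
                rw [himw]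
                apply div_neg_of_neg_of_pos (by linarith) hnsw
              have harg : (phiM w).arg = -(Real.pi/2) :=
                Complex.arg_eq_neg_pi_div_two_iff.2 ⟨hrew, himneg⟩
              rw [harg]
              field_simp
          have hevg : ∀ᶠ z in nhds w, 1 - ε' < σ * ((2/Real.pi) * (phiM z).arg) :=
            hgcont.eventually (eventually_gt_nhds (by
              show 1 - ε' < σ * ((2/Real.pi) * (phiM w).arg)
              rw [hgval]; linarith))
          filter_upwards [hevg.filter_mono nhdsWithin_le_nhds,
            eventually_mem_nhdsWithin] with z hz1 hzΩ
          have hF := hFbd z hzΩ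
          have hu1 : u z ≤ 1 := hle1 z hzΩ.1
          linarith
    -- apply the maximum principle
    have hmp := max_principle hΩopen hΩconv.isPreconnected hΩbdd huscΩ hsubΩ hbound ζ hζΩ
    rw [hvΩ ζ hζΩ] at hmp
    linarith
  -- let ε → 0
  have hζ1 : ζ ≠ 1 := by
    intro h; rw [h] at hζ; have := abs_lt_one hζ; simp at this
  have hζm1 : ζ ≠ -1 := by
    intro h; rw [h] at hζ; have := abs_lt_one hζ; simp at this
  have hl1 : Real.log (‖ζ - 1‖) < Real.log 2 := by
    apply Real.log_lt_log
    · rw [norm_pos_iff]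
      exact sub_ne_zero.2 hζ1
    · have h := norm_sub_le_norm_sub_add_norm_sub ζ 0 1
      simp only [sub_zero, zero_sub, norm_neg, norm_one] at h
      have := abs_lt_one hζ
      linarith
  have hl2 : Real.log (‖ζ + 1‖) < Real.log 2 := by
    apply Real.log_lt_log
    · rw [norm_pos_iff]
      intro h
      exact hζm1 (by linear_combination h)
    · have h := norm_add_le ζ 1
      simp only [norm_one] at h
      have := abs_lt_one hζ
      linarith
  set Cz : ℝ := 2*Real.log 2 - Real.log (‖ζ - 1‖) - Real.log (‖ζ + 1‖)
    with hCdef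
  have hC : 0 < Cz := by rw [hCdef]; linarith
  have : ∀ ε' : ℝ, 0 < ε' → u ζ ≤ hext ζ + ε' := by
    intro ε' hε'
    have h := hmain (ε'/Cz) (div_pos hε' hC)
    have hcc : ε'/Cz * Cz = ε' := div_mul_cancel₀ ε' hC.ne'
    rw [hcc] at h
    exact h
  exact le_of_forall_pos_le_add this

end Aux


/-- For the unit disc `D ⊂ ℂ` and `A = (-1,1) ⊂ D`, the relative
extremal function satisfies `h_{A,D}(ζ) = (2/π)|Arg((1+ζ)/(1-ζ))|` on `D`. -/
theorem relExtremal_interval_unitDisc :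
    ∀ ζ ∈ Metric.ball (0 : ℂ) 1,
      relExtremal {z : ℂ | z.im = 0 ∧ -1 < z.re ∧ z.re < 1} (Metric.ball (0 : ℂ) 1) ζ =
        (2 / Real.pi) * |Complex.arg ((1 + ζ) / (1 - ζ))| := by
  intro ζ hζ
  show sSup ((fun u : ℂ → ℝ => u ζ) ''
      {u | PlurisubharmonicOn (fun w => ((u w : ℝ) : EReal)) (Metric.ball (0:ℂ) 1) ∧
        (∀ w ∈ Metric.ball (0:ℂ) 1, u w ≤ 1) ∧
        ∀ w ∈ {z : ℂ | z.im = 0 ∧ -1 < z.re ∧ z.re < 1}, u w ≤ 0})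
    = (2 / Real.pi) * |Complex.arg ((1 + ζ) / (1 - ζ))|
  have hgoal : (2 / Real.pi) * |Complex.arg ((1 + ζ) / (1 - ζ))| = hext ζ := rfl
  rw [hgoal]
  have hmem : hext ζ ∈ (fun u : ℂ → ℝ => u ζ) ''
      {u | PlurisubharmonicOn (fun w => ((u w : ℝ) : EReal)) (Metric.ball (0:ℂ) 1) ∧
        (∀ w ∈ Metric.ball (0:ℂ) 1, u w ≤ 1) ∧
        ∀ w ∈ {z : ℂ | z.im = 0 ∧ -1 < z.re ∧ z.re < 1}, u w ≤ 0} :=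
    ⟨hext, ⟨hext_psh, fun w hw => hext_le_one hw,
      fun w hw => le_of_eq (hext_zero_on_A hw)⟩, rfl⟩
  have hub : ∀ x ∈ (fun u : ℂ → ℝ => u ζ) ''
      {u | PlurisubharmonicOn (fun w => ((u w : ℝ) : EReal)) (Metric.ball (0:ℂ) 1) ∧
        (∀ w ∈ Metric.ball (0:ℂ) 1, u w ≤ 1) ∧
        ∀ w ∈ {z : ℂ | z.im = 0 ∧ -1 < z.re ∧ z.re < 1}, u w ≤ 0}, x ≤ hext ζ := by
    rintro x ⟨u, ⟨h1, h2, h3⟩, rfl⟩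
    exact competitor_le_hext h1 h2 h3 hζ
  exact le_antisymm (csSup_le ⟨hext ζ, hmem⟩ hub) (le_csSup ⟨hext ζ, hub⟩ hmem)
end
end

section
/- Let A₁ = A₂ = A₃ = (-1,1), D₁ = D₂ = D₃ = the unit disc in ℂ, and let w = i/√3. Then the point z = (0, w, w) satisfies h_{A₁×A₂, D₁×D₂}(0,w) + h_{A₃,D₃}(w) ≥ 1, i.e. z does not belong to {z ∈ D₁×D₂×D₃ : max{h_{A₁,D₁}(z₁), h_{A₂,D₂}(z₂)} + h_{A₃,D₃}(z₃) < 1}, even though z belongs to the (3,2)-cross X_{3,2} = ∪_{|α|=2} X_α where X_{j,1} = D_j and X_{j,0} = A_j. -/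
open Set Filter Topology

noncomputable section

open Complex Metric intervalIntegral in
/-- Mean value property for holomorphic functions on circles, real part form. -/
lemma mean_value_re' {r : ℝ} (hr : 0 < r) {g : ℂ → ℂ}
    (hg : DifferentiableOn ℂ g (Metric.closedBall 0 r)) :
    (g 0).re = (2 * Real.pi)⁻¹ * ∫ θ in (0:ℝ)..(2*Real.pi), (g (circleMap 0 r θ)).re := by
  have h0 : (0:ℂ) ∈ Metric.ball (0:ℂ) r := by simpa using hr
  have hC := hg.circleIntegral_sub_inv_smul h0
  rw [circleIntegral] at hC
  have key : ∀ θ : ℝ, deriv (circleMap 0 r) θ • ((circleMap 0 r θ - 0)⁻¹ • g (circleMap 0 r θ))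
      = Complex.I * g (circleMap 0 r θ) := by
    intro θ
    have hne : circleMap 0 r θ ≠ 0 := by
      simpa using (circleMap_eq_center_iff (c := (0:ℂ)) (R := r) (θ := θ)).not.mpr hr.ne'
    rw [deriv_circleMap, smul_eq_mul, smul_eq_mul, sub_zero]
    field_simp
  simp only [key] at hC
  rw [intervalIntegral.integral_const_mul] at hC
  have hInt : (∫ θ in (0:ℝ)..(2*Real.pi), g (circleMap 0 r θ)) = (2 * Real.pi : ℝ) • g 0 := by
    have hIne : (Complex.I) ≠ 0 := Complex.I_ne_zero
    apply mul_left_cancel₀ hIne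
    rw [hC]
    rw [smul_eq_mul, Complex.real_smul]
    push_cast
    ring
  have hcont : Continuous fun θ : ℝ => g (circleMap 0 r θ) := by
    apply hg.continuousOn.comp_continuous (continuous_circleMap 0 r)
    intro θ
    exact sphere_subset_closedBall (circleMap_mem_sphere 0 hr.le θ)
  have hre : (∫ θ in (0:ℝ)..(2*Real.pi), g (circleMap 0 r θ)).re
      = ∫ θ in (0:ℝ)..(2*Real.pi), (g (circleMap 0 r θ)).re := by
    exact (Complex.reCLM.intervalIntegral_comp_comm (hcont.intervalIntegrable _ _)).symm
  rw [← hre, hInt]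
  have : ((2 * Real.pi : ℝ) • g 0).re = (2 * Real.pi) * (g 0).re := by
    rw [Complex.real_smul, Complex.re_ofReal_mul]
  rw [this]
  have hπ : (2 * Real.pi) ≠ 0 := by positivity
  field_simp

open Complex Metric in
/-- Comparison of holomorphic real parts at a circle center. -/
lemma re_le_of_circle {r : ℝ} (hr : 0 < r) {g h : ℂ → ℂ}
    (hg : DifferentiableOn ℂ g (Metric.closedBall 0 r))
    (hh : DifferentiableOn ℂ h (Metric.closedBall 0 r))
    (hle : ∀ t : ℂ, ‖t‖ = r → (g t).re ≤ (h t).re) :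
    (g 0).re ≤ (h 0).re := by
  rw [mean_value_re' hr hg, mean_value_re' hr hh]
  have hc : ∀ (f : ℂ → ℂ), DifferentiableOn ℂ f (Metric.closedBall 0 r) →
      Continuous fun θ : ℝ => (f (circleMap 0 r θ)).re := by
    intro f hf
    exact Complex.continuous_re.comp (hf.continuousOn.comp_continuous (continuous_circleMap 0 r)
      (fun θ => sphere_subset_closedBall (circleMap_mem_sphere 0 hr.le θ)))
  have hmono : (∫ θ in (0:ℝ)..(2*Real.pi), (g (circleMap 0 r θ)).re)
      ≤ ∫ θ in (0:ℝ)..(2*Real.pi), (h (circleMap 0 r θ)).re := by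
    apply intervalIntegral.integral_mono_on (by positivity)
      ((hc g hg).intervalIntegrable _ _) ((hc h hh).intervalIntegrable _ _)
    intro θ _
    exact hle _ (by rw [norm_circleMap_zero]; exact _root_.abs_of_pos hr)
  have h2π : (0:ℝ) ≤ (2 * Real.pi)⁻¹ := by positivity
  exact mul_le_mul_of_nonneg_left hmono h2π

/-- The real part of a holomorphic function is plurisubharmonic. -/
lemma psh_of_holo {E : Type*} [NormedAddCommGroup E] [NormedSpace ℂ E]
    {F : E → ℂ} {s : Set E} (hs : IsOpen s) (hF : DifferentiableOn ℂ F s) :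
    PlurisubharmonicOn (fun z => ((((F z).re : ℝ)) : EReal)) s := by
  constructor
  · have : ContinuousOn (fun z => ((((F z).re : ℝ)) : EReal)) s :=
      continuous_coe_real_ereal.comp_continuousOn
        (Complex.continuous_re.comp_continuousOn hF.continuousOn)
    exact this.upperSemicontinuousOn
  · intro a v r hr hmem p hp
    simp only [EReal.coe_le_coe_iff]
    have hline : ∀ t : ℂ, ‖t‖ ≤ r → DifferentiableAt ℂ (fun t : ℂ => F (a + t • v)) t := by
      intro t ht
      have h1 : DifferentiableAt ℂ (fun t : ℂ => a + t • v) t := by fun_prop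
      exact (hF.differentiableAt (hs.mem_nhds (hmem t ht))).comp t h1
    have hg : DifferentiableOn ℂ (fun t : ℂ => F (a + t • v)) (Metric.closedBall 0 r) := by
      intro t ht
      have : ‖t‖ ≤ r := by
        simpa [Complex.dist_eq] using (Metric.mem_closedBall.mp ht)
      exact (hline t this).differentiableWithinAt
    have hh : DifferentiableOn ℂ (fun t : ℂ => p.eval t) (Metric.closedBall 0 r) :=
      (p.differentiable).differentiableOn
    have := re_le_of_circle hr hg hh (fun t ht => by
      have := hp t ht
      simpa [EReal.coe_le_coe_iff] using this)
    simpa using this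

def fh : ℂ → ℂ := fun ζ => ((2 / Real.pi : ℝ) : ℂ) * (-Complex.I * Complex.log ((1 + ζ) / (1 - ζ)))
def uh : ℂ → ℝ := fun ζ => (fh ζ).re

lemma uh_eq (ζ : ℂ) : uh ζ = (2 / Real.pi) * Complex.arg ((1 + ζ) / (1 - ζ)) := by
  simp [uh, fh, Complex.re_ofReal_mul, Complex.mul_re, Complex.log_im]

lemma one_sub_ne_s1 {ζ : ℂ} (hζ : ζ ∈ Metric.ball (0:ℂ) 1) : (1 : ℂ) - ζ ≠ 0 := by
  intro h
  have : ζ = 1 := by linear_combination -h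
  rw [this] at hζ
  simp at hζ

lemma re_pos {ζ : ℂ} (hζ : ζ ∈ Metric.ball (0:ℂ) 1) : 0 < ((1 + ζ) / (1 - ζ)).re := by
  have habs : ‖ζ‖ < 1 := by simpa [Complex.dist_eq] using hζ
  have hnsq : Complex.normSq ζ < 1 := by
    have := Complex.sq_norm ζ
    nlinarith [norm_nonneg ζ]
  have hden : 0 < Complex.normSq (1 - ζ) :=
    Complex.normSq_pos.mpr (one_sub_ne_s1 hζ)
  rw [Complex.div_re]
  have hζsq : ζ.re * ζ.re + ζ.im * ζ.im < 1 := by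
    simpa [Complex.normSq_apply] using hnsq
  have h1 : (1 + ζ).re * (1 - ζ).re + (1 + ζ).im * (1 - ζ).im
      = 1 - (ζ.re * ζ.re + ζ.im * ζ.im) := by
    simp [Complex.add_re, Complex.sub_re, Complex.add_im, Complex.sub_im]
    ring
  rw [← add_div, h1]
  exact div_pos (by linarith) hden

lemma uh_le_one {ζ : ℂ} (hζ : ζ ∈ Metric.ball (0:ℂ) 1) : uh ζ ≤ 1 := by
  rw [uh_eq]
  have harg : |Complex.arg ((1 + ζ) / (1 - ζ))| < Real.pi / 2 :=
    Complex.abs_arg_lt_pi_div_two_iff.mpr (Or.inl (re_pos hζ))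
  have h1 : Complex.arg ((1 + ζ) / (1 - ζ)) ≤ Real.pi / 2 := (abs_lt.mp harg).2.le
  have hπ : 0 < Real.pi := Real.pi_pos
  rw [div_mul_eq_mul_div, div_le_one hπ]
  linarith

lemma uh_nonpos {ζ : ℂ} (hζ : ζ.im = 0 ∧ -1 < ζ.re ∧ ζ.re < 1) : uh ζ ≤ 0 := by
  obtain ⟨him, h1, h2⟩ := hζ
  have hz : ζ = (ζ.re : ℂ) := by
    apply Complex.ext <;> simp [him]
  rw [uh_eq, hz]
  have hq : ((1:ℂ) + (ζ.re:ℂ)) / (1 - (ζ.re:ℂ)) = (((1 + ζ.re) / (1 - ζ.re) : ℝ) : ℂ) := by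
    push_cast; ring
  have hnn : (0:ℝ) ≤ (1 + ζ.re) / (1 - ζ.re) := div_nonneg (by linarith) (by linarith)
  rw [hq, Complex.arg_ofReal_of_nonneg hnn]
  simp

lemma uh_nonpos' {ζ : ℂ} (hζ : ζ.im = 0 ∧ -1 < ζ.re ∧ ζ.re < 1) : uh ζ ≤ 0 := uh_nonpos hζ

lemma fh_diff : DifferentiableOn ℂ fh (Metric.ball (0:ℂ) 1) := by
  intro ζ hζ
  have hq : DifferentiableAt ℂ (fun ζ : ℂ => (1 + ζ) / (1 - ζ)) ζ := by
    apply DifferentiableAt.div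
    · fun_prop
    · fun_prop
    · exact one_sub_ne_s1 hζ
  have hslit : (1 + ζ) / (1 - ζ) ∈ Complex.slitPlane := Or.inl (re_pos hζ)
  have hlog : DifferentiableAt ℂ (fun ζ : ℂ => Complex.log ((1 + ζ) / (1 - ζ))) ζ :=
    (Complex.differentiableAt_log hslit).comp (g := Complex.log) ζ hq
  exact ((hlog.const_mul (-Complex.I)).const_mul _).differentiableWithinAt

lemma uh_zero : uh 0 = 0 := by
  rw [uh_eq]; simp

lemma sqrt3_ne : ((Real.sqrt 3 : ℝ) : ℂ) ≠ 0 := by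
  simp only [ne_eq, Complex.ofReal_eq_zero]
  positivity

lemma uh_w : uh (Complex.I / ((Real.sqrt 3 : ℝ) : ℂ)) = 2 / 3 := by
  set w : ℂ := Complex.I / ((Real.sqrt 3 : ℝ) : ℂ) with hw
  have hsq : ((Real.sqrt 3 : ℝ) : ℂ) * ((Real.sqrt 3 : ℝ) : ℂ) = 3 := by
    rw [← Complex.ofReal_mul, Real.mul_self_sqrt (by norm_num)]
    norm_num
  have hwD : (1 + w) / (1 - w)
      = (Complex.cos ((Real.pi / 3 : ℝ) : ℂ) + Complex.sin ((Real.pi / 3 : ℝ) : ℂ) * Complex.I) := by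
    rw [← Complex.ofReal_cos, ← Complex.ofReal_sin, Real.cos_pi_div_three, Real.sin_pi_div_three]
    have hden : (1 : ℂ) - w ≠ 0 := by
      intro h
      have : w = 1 := by linear_combination -h
      have : ‖w‖ = 1 := by rw [this]; simp
      rw [hw] at this
      rw [norm_div, Complex.norm_I, Complex.norm_real, Real.norm_eq_abs,
        abs_of_pos (by positivity : (0:ℝ) < Real.sqrt 3)] at this
      have h3 : (1:ℝ) < Real.sqrt 3 := by
        nlinarith [Real.sq_sqrt (by norm_num : (3:ℝ) ≥ 0), Real.sqrt_nonneg 3]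
      rw [div_eq_one_iff_eq (by positivity)] at this
      linarith
    rw [div_eq_iff hden, hw]
    push_cast
    field_simp
    linear_combination (-Complex.I) * hsq
      + (((Real.sqrt 3 : ℝ) : ℂ)) * Complex.I_sq
  have hmem : Real.pi / 3 ∈ Set.Ioc (-Real.pi) Real.pi := by
    constructor <;> linarith [Real.pi_pos]
  rw [uh_eq, hwD, Complex.arg_cos_add_sin_mul_I hmem]
  have hπ : Real.pi ≠ 0 := Real.pi_ne_zero
  field_simp

/-- Generic lower bound for the relative extremal function from an admissible competitor. -/
lemma le_relExtremal {E : Type*} [NormedAddCommGroup E] [NormedSpace ℂ E]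
    {A D : Set E} {z : E} (hz : z ∈ D) {u : E → ℝ}
    (hu : PlurisubharmonicOn (fun w => ((u w : ℝ) : EReal)) D)
    (h1 : ∀ w ∈ D, u w ≤ 1) (h0 : ∀ w ∈ A, u w ≤ 0) :
    u z ≤ relExtremal A D z := by
  apply le_csSup
  · refine ⟨1, ?_⟩
    rintro x ⟨v, ⟨_, hv1, _⟩, rfl⟩
    exact hv1 z hz
  · exact ⟨u, ⟨hu, h1, h0⟩, rfl⟩

def Fp : ℂ × ℂ → ℂ := fun z => ((1/2 : ℝ) : ℂ) * (fh z.1 + fh z.2)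
def Up : ℂ × ℂ → ℝ := fun z => (Fp z).re

lemma Up_eq (z : ℂ × ℂ) : Up z = (1/2) * (uh z.1 + uh z.2) := by
  simp [Up, Fp, Complex.re_ofReal_mul, Complex.add_re, uh]

lemma Fp_diff : DifferentiableOn ℂ Fp (Metric.ball (0:ℂ) 1 ×ˢ Metric.ball (0:ℂ) 1) := by
  intro z hz
  obtain ⟨h1, h2⟩ := hz
  have d1 : DifferentiableAt ℂ (fun z : ℂ × ℂ => fh z.1) z :=
    (fh_diff.differentiableAt (Metric.isOpen_ball.mem_nhds h1)).comp z differentiableAt_fst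
  have d2 : DifferentiableAt ℂ (fun z : ℂ × ℂ => fh z.2) z :=
    (fh_diff.differentiableAt (Metric.isOpen_ball.mem_nhds h2)).comp z differentiableAt_snd
  exact ((d1.add d2).const_mul _).differentiableWithinAt

/-- With `A₁ = A₂ = A₃ = (-1,1)`, `D₁ = D₂ = D₃ = 𝔻` and
`w = i/√3`, the point `z = (0,w,w)` belongs to the `(3,2)`-cross
`X_{3,2} = (D×D×A) ∪ (D×A×D) ∪ (A×D×D)` but satisfies
`h_{A₁×A₂,D₁×D₂}(0,w) + h_{A₃,D₃}(w) ≥ 1`, i.e. it does not belong to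
`{z : max(h(z₁),h(z₂)) + h(z₃) < 1}`. -/
theorem point_in_cross_not_in_hullZ :
    let A : Set ℂ := {z : ℂ | z.im = 0 ∧ -1 < z.re ∧ z.re < 1}
    let D : Set ℂ := Metric.ball (0 : ℂ) 1
    let w : ℂ := Complex.I / ((Real.sqrt 3 : ℝ) : ℂ)
    let z : ℂ × ℂ × ℂ := ((0 : ℂ), w, w)
    z ∈ (D ×ˢ D ×ˢ A) ∪ (D ×ˢ A ×ˢ D) ∪ (A ×ˢ D ×ˢ D) ∧
    1 ≤ relExtremal (A ×ˢ A) (D ×ˢ D) (z.1, z.2.1) + relExtremal A D z.2.2 ∧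
    ¬ (max (relExtremal A D z.1) (relExtremal A D z.2.1) + relExtremal A D z.2.2 < 1) := by
  intro A D w z
  have hπ := Real.pi_pos
  have h3pos : (0:ℝ) < Real.sqrt 3 := by positivity
  have h3gt1 : (1:ℝ) < Real.sqrt 3 := by
    nlinarith [Real.sq_sqrt (by norm_num : (0:ℝ) ≤ 3), Real.sqrt_nonneg 3]
  have habsw : ‖w‖ = 1 / Real.sqrt 3 := by
    rw [norm_div, Complex.norm_I, Complex.norm_real, Real.norm_eq_abs, abs_of_pos h3pos]
  have hwD : w ∈ D := by
    have : ‖w‖ < 1 := by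
      rw [habsw, div_lt_one h3pos]; exact h3gt1
    simpa [D, Metric.mem_ball, Complex.dist_eq] using this
  have h0D : (0:ℂ) ∈ D := by simp [D]
  have h0A : (0:ℂ) ∈ A := by
    refine ⟨by simp, by norm_num, by norm_num⟩
  -- admissibility of uh on (A, D)
  have hpsh : PlurisubharmonicOn (fun ζ => ((uh ζ : ℝ) : EReal)) D :=
    psh_of_holo Metric.isOpen_ball fh_diff
  have hle1 : ∀ ζ ∈ D, uh ζ ≤ 1 := fun ζ hζ => uh_le_one hζ
  have hle0 : ∀ ζ ∈ A, uh ζ ≤ 0 := fun ζ hζ => uh_nonpos hζ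
  have hw23 : (2/3 : ℝ) ≤ relExtremal A D w := by
    have := le_relExtremal hwD hpsh hle1 hle0
    rwa [uh_w] at this
  -- admissibility of Up on (A ×ˢ A, D ×ˢ D)
  have hpshP : PlurisubharmonicOn (fun ζ : ℂ × ℂ => ((Up ζ : ℝ) : EReal)) (D ×ˢ D) :=
    psh_of_holo (Metric.isOpen_ball.prod Metric.isOpen_ball) Fp_diff
  have hle1P : ∀ ζ ∈ D ×ˢ D, Up ζ ≤ 1 := by
    rintro ζ ⟨hζ1, hζ2⟩
    rw [Up_eq]
    have := uh_le_one hζ1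
    have := uh_le_one hζ2
    linarith
  have hle0P : ∀ ζ ∈ A ×ˢ A, Up ζ ≤ 0 := by
    rintro ζ ⟨hζ1, hζ2⟩
    rw [Up_eq]
    have := uh_nonpos hζ1
    have := uh_nonpos hζ2
    linarith
  have hP13 : (1/3 : ℝ) ≤ relExtremal (A ×ˢ A) (D ×ˢ D) ((0:ℂ), w) := by
    have hm : ((0:ℂ), w) ∈ D ×ˢ D := ⟨h0D, hwD⟩
    have := le_relExtremal hm hpshP hle1P hle0P
    rw [Up_eq] at this
    have huhw : uh w = 2/3 := uh_w
    have huh0 : uh (0:ℂ) = 0 := uh_zero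
    simp only [huh0, huhw] at this
    linarith
  refine ⟨Or.inr ⟨h0A, hwD, hwD⟩, ?_, ?_⟩
  · show (1:ℝ) ≤ relExtremal (A ×ˢ A) (D ×ˢ D) ((0:ℂ), w) + relExtremal A D w
    linarith
  · intro hcon
    have hmax : relExtremal A D w ≤ max (relExtremal A D (0:ℂ)) (relExtremal A D w) :=
      le_max_right _ _
    have : max (relExtremal A D (0:ℂ)) (relExtremal A D w) + relExtremal A D w < 1 := hcon
    linarith
end
end

section
/- Let M ⊂ ℂⁿ × ℂᵐ be a pluripolar set. Then there exists a pluripolar set Q ⊂ ℂⁿ such that for every a ∉ Q, the fiber M_a := {w ∈ ℂᵐ : (a,w) ∈ M} is pluripolar in ℂᵐ. -/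
open Set Filter Topology

noncomputable section

lemma psh_slice_right {n m : ℕ} {u : (Fin n → ℂ) × (Fin m → ℂ) → EReal}
    (hu : PlurisubharmonicOn u Set.univ) (a : Fin n → ℂ) :
    PlurisubharmonicOn (fun w => u (a, w)) Set.univ := by
  constructor
  · intro w _ y hy
    have hc : ContinuousAt (fun w : Fin m → ℂ => ((a, w) : (Fin n → ℂ) × (Fin m → ℂ))) w := by
      fun_prop
    have h1 := hu.1 (a, w) (Set.mem_univ _) y hy
    rw [nhdsWithin_univ] at h1 ⊢
    exact hc.tendsto.eventually h1
  · intro w v r hr _ p hp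
    have key := hu.2 (a, w) (0, v) r hr (fun t _ => Set.mem_univ _) p
    have heq : ∀ t : ℂ, (a, w) + t • ((0 : Fin n → ℂ), v) = (a, w + t • v) := by
      intro t
      simp [Prod.ext_iff]
    refine key ?_
    intro t ht
    rw [heq t]
    exact hp t ht

/-- if `M ⊆ ℂⁿ × ℂᵐ` is pluripolar, then there is a pluripolar
set `Q ⊆ ℂⁿ` such that all fibers `M_a = {w : (a,w) ∈ M}` with `a ∉ Q` are
pluripolar in `ℂᵐ`. -/
theorem pluripolar_fibers {n m : ℕ} (M : Set ((Fin n → ℂ) × (Fin m → ℂ)))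
    (hM : Pluripolar M) :
    ∃ Q : Set (Fin n → ℂ), Pluripolar Q ∧
      ∀ a ∉ Q, Pluripolar {w : Fin m → ℂ | (a, w) ∈ M} := by
  obtain ⟨u, hu, ⟨z0, hz0⟩, hMsub⟩ := hM
  refine ⟨{a : Fin n → ℂ | u (a, z0.2) = ⊥}, ?_, ?_⟩
  · -- Q is pluripolar via a ↦ u (a, z0.2)
    refine ⟨fun a => u (a, z0.2), ?_, ⟨z0.1, by simpa using hz0⟩, fun a ha => ha⟩
    constructor
    · intro a _ y hy
      have hc : ContinuousAt (fun a : Fin n → ℂ => ((a, z0.2) : (Fin n → ℂ) × (Fin m → ℂ))) a := by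
        fun_prop
      have h1 := hu.1 (a, z0.2) (Set.mem_univ _) y hy
      rw [nhdsWithin_univ] at h1 ⊢
      exact hc.tendsto.eventually h1
    · intro a v r hr _ p hp
      have key := hu.2 (a, z0.2) (v, 0) r hr (fun t _ => Set.mem_univ _) p
      have heq : ∀ t : ℂ, (a, z0.2) + t • (v, (0 : Fin m → ℂ)) = (a + t • v, z0.2) := by
        intro t
        simp [Prod.ext_iff]
      refine key ?_
      intro t ht
      rw [heq t]
      exact hp t ht
  · intro a ha
    refine ⟨fun w => u (a, w), psh_slice_right hu a, ⟨z0.2, ha⟩, ?_⟩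
    intro w hw
    exact hMsub hw
end
end
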